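/- Let 𝕏 be a nonempty finite set, K a positive integer, γ ∈ (0,1), and f₁,…,f_K : 𝕏 → [0, 1/(1−γ)]. Let p be a probability mass function on 𝕏 and let X₁,…,X_n be i.i.d. random variables with law p; write φ̂_k = (1/n) Σ_{j=1}^n f_k(X_j) for the empirical feature expectations. Let ε > 0, ε_s ≥ 0, δ_s ∈ [0,1], and let σ₁,…,σ_K be real-valued random variables (sampling-based estimates of the feature expectations) defined on the same probability space such that P(∃ k: |σ_k − φ̂_k| > ε_s) ≤ δ_s. Then with probability at least 1 − (δ + δ_s), where δ = 2K·exp(−n·ε²·(1−γ)²/(2K²)), it holds simultaneously for all k ∈ {1,…,K} that |E_p[f_k] − σ_k| ≤ ε/(2K) + ε_s. (This is the paper's Lemma 2, constraint bounds for incremental latent maximum-entropy IRL.) -/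

import Mathlib

open Finset MeasureTheory ProbabilityTheory
open Real

section HoeffdingAux


/-- Hoeffding's lemma, core analytic inequality. -/
lemma hoeffding_core {p : ℝ} (hp0 : 0 ≤ p) (hp1 : p ≤ 1) (t : ℝ) :
    (1 - p) * exp (-(p * t)) + p * exp ((1 - p) * t) ≤ exp (t ^ 2 / 8) := by
  set φ : ℝ → ℝ := fun t => (1 - p) * exp (-(p * t)) + p * exp ((1 - p) * t) with hφdef
  have hφpos : ∀ s, 0 < φ s := by
    intro s
    have h1 := exp_pos (-(p * s))
    have h2 := exp_pos ((1 - p) * s)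
    have hm : min (exp (-(p * s))) (exp ((1 - p) * s)) ≤ exp (-(p * s)) := min_le_left _ _
    have hm' : min (exp (-(p * s))) (exp ((1 - p) * s)) ≤ exp ((1 - p) * s) := min_le_right _ _
    have hmpos : 0 < min (exp (-(p * s))) (exp ((1 - p) * s)) := lt_min h1 h2
    have : (1 - p) * min (exp (-(p * s))) (exp ((1 - p) * s))
        + p * min (exp (-(p * s))) (exp ((1 - p) * s)) ≤ φ s := by
      apply add_le_add
      · exact mul_le_mul_of_nonneg_left hm (by linarith)
      · exact mul_le_mul_of_nonneg_left hm' hp0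
    nlinarith
  set φ' : ℝ → ℝ := fun t => p * (1 - p) * (exp ((1 - p) * t) - exp (-(p * t))) with hφ'def
  set φ'' : ℝ → ℝ := fun t => p * (1 - p) *
      ((1 - p) * exp ((1 - p) * t) + p * exp (-(p * t))) with hφ''def
  have hd1 : ∀ s, HasDerivAt φ (φ' s) s := by
    intro s
    have h1 : HasDerivAt (fun u : ℝ => -(p * u)) (-p) s := by
      exact (by simpa using ((hasDerivAt_id s).const_mul p).neg : HasDerivAt (-fun y => p * y) (-p) s)
    have h2 : HasDerivAt (fun u : ℝ => (1 - p) * u) (1 - p) s := by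
      simpa using (hasDerivAt_id s).const_mul (1 - p)
    have e1 := (h1.exp.const_mul (1 - p))
    have e2 := (h2.exp.const_mul p)
    convert e1.add e2 using 1
    show φ' s = _
    simp only [hφ'def]
    ring
    all_goals rfl
  have hd2 : ∀ s, HasDerivAt φ' (φ'' s) s := by
    intro s
    have h1 : HasDerivAt (fun u : ℝ => -(p * u)) (-p) s := by
      exact (by simpa using ((hasDerivAt_id s).const_mul p).neg : HasDerivAt (-fun y => p * y) (-p) s)
    have h2 : HasDerivAt (fun u : ℝ => (1 - p) * u) (1 - p) s := by
      simpa using (hasDerivAt_id s).const_mul (1 - p)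
    have e := ((h2.exp.sub h1.exp).const_mul (p * (1 - p)))
    convert e using 1
    show φ'' s = _
    simp only [hφ''def]
    ring
    all_goals rfl
  set G : ℝ → ℝ := fun s => φ' s / φ s with hGdef
  have hdG : ∀ s, HasDerivAt G ((φ'' s * φ s - φ' s * φ' s) / (φ s) ^ 2) s := by
    intro s
    exact (hd2 s).div (hd1 s) (hφpos s).ne'
  have hDle : ∀ s, (φ'' s * φ s - φ' s * φ' s) / (φ s) ^ 2 ≤ 1 / 4 := by
    intro s
    rw [div_le_iff₀ (pow_pos (hφpos s) 2)]
    have a := exp_pos (-(p * s))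
    have b := exp_pos ((1 - p) * s)
    have key : φ'' s * φ s - φ' s * φ' s
        = (1 - p) * exp (-(p * s)) * (p * exp ((1 - p) * s)) := by
      simp only [hφdef, hφ'def, hφ''def]; ring
    rw [key]
    nlinarith [sq_nonneg ((1 - p) * exp (-(p * s)) - p * exp ((1 - p) * s))]
  -- h t = t^2/8 - log (φ t); H = h' ; H' = 1/4 - D ≥ 0
  set H : ℝ → ℝ := fun s => s / 4 - G s with hHdef
  have hdH : ∀ s, HasDerivAt H (1 / 4 - (φ'' s * φ s - φ' s * φ' s) / (φ s) ^ 2) s := by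
    intro s
    exact (((hasDerivAt_id s).div_const 4).sub (hdG s))
  have hHmono : Monotone H := by
    apply monotone_of_deriv_nonneg
    · exact fun s => (hdH s).differentiableAt
    · intro s
      rw [(hdH s).deriv]
      linarith [hDle s]
  have hφ0 : φ 0 = 1 := by simp [hφdef]
  have hφ'0 : φ' 0 = 0 := by simp [hφ'def]
  have hH0 : H 0 = 0 := by simp [hHdef, hGdef, hφ'0]
  set h : ℝ → ℝ := fun s => s ^ 2 / 8 - log (φ s) with hhdef
  have hdh : ∀ s, HasDerivAt h (H s) s := by
    intro s
    have l : HasDerivAt (fun u => log (φ u)) (φ' s / φ s) s := (hd1 s).log (hφpos s).ne'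
    have q : HasDerivAt (fun u : ℝ => u ^ 2 / 8) (s / 4) s := by
      convert ((hasDerivAt_pow 2 s).div_const 8) using 1
      rfl
      rfl
      simp
      ring
    convert q.sub l using 1
    all_goals rfl
  have hh0 : h 0 = 0 := by simp [hhdef, hφ0]
  have hnn : ∀ s, 0 ≤ h s := by
    intro s
    rcases le_or_gt 0 s with hs | hs
    · have mono : MonotoneOn h (Set.Ici (0:ℝ)) := by
        apply monotoneOn_of_deriv_nonneg (convex_Ici 0)
        · exact fun u _ => ((hdh u).differentiableAt).continuousAt.continuousWithinAt
        · exact fun u _ => ((hdh u).differentiableAt).differentiableWithinAt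
        · intro u hu
          rw [interior_Ici] at hu
          rw [(hdh u).deriv]
          have := hHmono (le_of_lt hu)
          rw [hH0] at this
          linarith
      have := mono (Set.self_mem_Ici) hs hs
      rwa [hh0] at this
    · have anti : AntitoneOn h (Set.Iic (0:ℝ)) := by
        apply antitoneOn_of_deriv_nonpos (convex_Iic 0)
        · exact fun u _ => ((hdh u).differentiableAt).continuousAt.continuousWithinAt
        · exact fun u _ => ((hdh u).differentiableAt).differentiableWithinAt
        · intro u hu
          rw [interior_Iic] at hu
          rw [(hdh u).deriv]
          have := hHmono (le_of_lt hu)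
          rw [hH0] at this
          linarith
      have := anti (le_of_lt hs) (Set.self_mem_Iic) (le_of_lt hs)
      rwa [hh0] at this
  have := hnn t
  have hlog : log (φ t) ≤ t ^ 2 / 8 := by simp only [hhdef] at this; linarith
  calc φ t = exp (log (φ t)) := (exp_log (hφpos t)).symm
    _ ≤ exp (t ^ 2 / 8) := exp_le_exp.mpr hlog


/-- mgf bound for a bounded observable of a finite-valued random variable. -/
lemma mgf_bound {X : Type*} [Fintype X] [MeasurableSpace X] [MeasurableSingletonClass X]
    {Ω : Type*} [MeasurableSpace Ω] (μ : Measure Ω) [IsProbabilityMeasure μ]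
    (T : Ω → X) (hT : Measurable T) (p : X → ℝ) (hp0 : ∀ x, 0 ≤ p x)
    (hp1 : ∑ x : X, p x = 1) (hlaw : ∀ x, μ {ω | T ω = x} = ENNReal.ofReal (p x))
    (g : X → ℝ) {R : ℝ} (hR : 0 < R) (hg : ∀ x, g x ∈ Set.Icc (0:ℝ) R) (s : ℝ) :
    ∫ ω, exp (s * (g (T ω) - (∑ x : X, p x * g x))) ∂μ ≤ exp (s ^ 2 * R ^ 2 / 8) := by
  set m : ℝ := ∑ x : X, p x * g x with hm
  have hmap : IsProbabilityMeasure (μ.map T) := Measure.isProbabilityMeasure_map hT.aemeasurable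
  have hint : ∫ ω, exp (s * (g (T ω) - m)) ∂μ = ∑ x : X, p x * exp (s * (g x - m)) := by
    have h1 : ∫ ω, exp (s * (g (T ω) - m)) ∂μ
        = ∫ x, exp (s * (g x - m)) ∂(μ.map T) := by
      rw [integral_map hT.aemeasurable (measurable_of_finite _).aestronglyMeasurable]
    rw [h1, integral_fintype _]
    refine Finset.sum_congr rfl fun x _ => ?_
    rw [Measure.real, Measure.map_apply hT (measurableSet_singleton x)]
    have : T ⁻¹' {x} = {ω | T ω = x} := rfl
    rw [this, hlaw x, ENNReal.toReal_ofReal (hp0 x), smul_eq_mul]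
    exact Integrable.of_finite
  rw [hint]
  have hm0 : 0 ≤ m := Finset.sum_nonneg fun x _ => mul_nonneg (hp0 x) (hg x).1
  have hmR : m ≤ R := by
    calc m ≤ ∑ x : X, p x * R := Finset.sum_le_sum fun x _ =>
            mul_le_mul_of_nonneg_left (hg x).2 (hp0 x)
      _ = R := by rw [← Finset.sum_mul, hp1, one_mul]
  set E0 : ℝ := exp (s * (0 - m)) with hE0
  set E1 : ℝ := exp (s * (R - m)) with hE1
  have hconv : ∀ x : X, exp (s * (g x - m)) ≤ (1 - g x / R) * E0 + (g x / R) * E1 := by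
    intro x
    have hx0 := (hg x).1
    have hxR := (hg x).2
    have ha : (0:ℝ) ≤ 1 - g x / R := by
      rw [sub_nonneg, div_le_one hR]; exact hxR
    have hb : (0:ℝ) ≤ g x / R := div_nonneg hx0 hR.le
    have hab : (1 - g x / R) + g x / R = 1 := by ring
    have := convexOn_exp.2 (Set.mem_univ (s * (0 - m))) (Set.mem_univ (s * (R - m)))
      ha hb hab
    simp only [smul_eq_mul] at this
    have harg : (1 - g x / R) * (s * (0 - m)) + g x / R * (s * (R - m)) = s * (g x - m) := by
      field_simp
      ring
    rwa [harg] at this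
  have hsum : ∑ x : X, p x * exp (s * (g x - m))
      ≤ (1 - m / R) * E0 + (m / R) * E1 := by
    calc ∑ x : X, p x * exp (s * (g x - m))
        ≤ ∑ x : X, p x * ((1 - g x / R) * E0 + (g x / R) * E1) :=
          Finset.sum_le_sum fun x _ => mul_le_mul_of_nonneg_left (hconv x) (hp0 x)
      _ = ∑ x : X, (p x * E0 + (p x * g x) * ((E1 - E0) / R)) :=
          Finset.sum_congr rfl fun x _ => by ring
      _ = (∑ x : X, p x) * E0 + (∑ x : X, p x * g x) * ((E1 - E0) / R) := by
          rw [Finset.sum_add_distrib, Finset.sum_mul, Finset.sum_mul]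
      _ = (1 - m / R) * E0 + (m / R) * E1 := by
          rw [hp1, ← hm]
          field_simp
          ring
  refine hsum.trans ?_
  have hq0 : 0 ≤ m / R := div_nonneg hm0 hR.le
  have hq1 : m / R ≤ 1 := (div_le_one hR).mpr hmR
  have hkey := hoeffding_core hq0 hq1 (s * R)
  have e0eq : -(m / R * (s * R)) = s * (0 - m) := by field_simp; ring
  have e1eq : (1 - m / R) * (s * R) = s * (R - m) := by field_simp
  rw [e0eq, e1eq] at hkey
  have : (s * R) ^ 2 / 8 = s ^ 2 * R ^ 2 / 8 := by ring
  rw [this] at hkey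
  exact hkey


lemma hoeffding_tail {X : Type*} [Fintype X] [MeasurableSpace X] [MeasurableSingletonClass X]
    {Ω : Type*} [MeasurableSpace Ω] (μ : Measure Ω) [IsProbabilityMeasure μ]
    {n : ℕ} (hn : 0 < n) (Xs : Fin n → Ω → X) (hmeas : ∀ j, Measurable (Xs j))
    (hindep : iIndepFun Xs μ)
    (p : X → ℝ) (hp0 : ∀ x, 0 ≤ p x) (hp1 : ∑ x : X, p x = 1)
    (hlaw : ∀ j x, μ {ω | Xs j ω = x} = ENNReal.ofReal (p x))
    (g : X → ℝ) {R : ℝ} (hR : 0 < R) (hg : ∀ x, g x ∈ Set.Icc (0:ℝ) R)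
    {t0 : ℝ} (ht0 : 0 < t0) :
    μ {ω | t0 < |(1 / (n : ℝ)) * ∑ j, g (Xs j ω) - ∑ x : X, p x * g x|}
      ≤ ENNReal.ofReal (2 * exp (-(2 * n * t0 ^ 2 / R ^ 2))) := by
  set m : ℝ := ∑ x : X, p x * g x with hm
  set Z : Fin n → Ω → ℝ := fun j ω => g (Xs j ω) - m with hZ
  have hZmeas : ∀ j, Measurable (Z j) := fun j =>
    (measurable_of_finite (fun x => g x - m)).comp (hmeas j)
  have hZindep : iIndepFun Z μ :=
    hindep.comp (fun _ x => g x - m) (fun _ => measurable_of_finite _)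
  have hZint : ∀ (s : ℝ) (j : Fin n), Integrable (fun ω => exp (s * Z j ω)) μ := by
    intro s j
    have : (fun ω => exp (s * Z j ω)) = (fun x => exp (s * (g x - m))) ∘ Xs j := rfl
    rw [this]
    have hmap : IsProbabilityMeasure (μ.map (Xs j)) :=
      Measure.isProbabilityMeasure_map (hmeas j).aemeasurable
    exact (integrable_map_measure (measurable_of_finite _).aestronglyMeasurable
      (hmeas j).aemeasurable).mp (Integrable.of_finite)
  have hmgf : ∀ s : ℝ, mgf (∑ j, Z j) μ s ≤ exp (n * (s ^ 2 * R ^ 2 / 8)) := by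
    intro s
    rw [hZindep.mgf_sum hZmeas]
    calc ∏ j : Fin n, mgf (Z j) μ s ≤ ∏ j : Fin n, exp (s ^ 2 * R ^ 2 / 8) := by
          refine Finset.prod_le_prod (fun j _ => mgf_nonneg) fun j _ => ?_
          exact mgf_bound μ (Xs j) (hmeas j) p hp0 hp1 (hlaw j) g hR hg s
      _ = exp (n * (s ^ 2 * R ^ 2 / 8)) := by
          rw [Finset.prod_const, ← exp_nat_mul]
          simp
  set s : ℝ := 4 * t0 / R ^ 2 with hs
  have hspos : 0 < s := by positivity
  have hexp : -s * (n * t0) + n * (s ^ 2 * R ^ 2 / 8) = -(2 * n * t0 ^ 2 / R ^ 2) := by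
    rw [hs]
    field_simp
    ring
  have hup : (μ {ω | (n : ℝ) * t0 ≤ (∑ j, Z j) ω}).toReal ≤ exp (-(2 * n * t0 ^ 2 / R ^ 2)) := by
    calc (μ {ω | (n : ℝ) * t0 ≤ (∑ j, Z j) ω}).toReal
        ≤ exp (-s * (n * t0)) * mgf (∑ j, Z j) μ s :=
          measure_ge_le_exp_mul_mgf _ hspos.le (hZindep.integrable_exp_mul_sum hZmeas
            (fun j _ => hZint s j))
      _ ≤ exp (-s * (n * t0)) * exp (n * (s ^ 2 * R ^ 2 / 8)) := by
          exact mul_le_mul_of_nonneg_left (hmgf s) (exp_pos _).le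
      _ = exp (-(2 * n * t0 ^ 2 / R ^ 2)) := by rw [← exp_add, hexp]
  have hlow : (μ {ω | (∑ j, Z j) ω ≤ -((n : ℝ) * t0)}).toReal
      ≤ exp (-(2 * n * t0 ^ 2 / R ^ 2)) := by
    have hexp' : -(-s) * -((n:ℝ) * t0) + n * ((-s) ^ 2 * R ^ 2 / 8)
        = -(2 * n * t0 ^ 2 / R ^ 2) := by
      rw [hs]
      field_simp
      ring
    calc (μ {ω | (∑ j, Z j) ω ≤ -((n : ℝ) * t0)}).toReal
        ≤ exp (-(-s) * -((n:ℝ) * t0)) * mgf (∑ j, Z j) μ (-s) :=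
          measure_le_le_exp_mul_mgf _ (by linarith) (hZindep.integrable_exp_mul_sum hZmeas
            (fun j _ => hZint (-s) j))
      _ ≤ exp (-(-s) * -((n:ℝ) * t0)) * exp (n * ((-s) ^ 2 * R ^ 2 / 8)) := by
          have := hmgf (-s)
          exact mul_le_mul_of_nonneg_left this (exp_pos _).le
      _ = exp (-(2 * n * t0 ^ 2 / R ^ 2)) := by rw [← exp_add, hexp']
  -- event inclusion
  have hsub : {ω | t0 < |(1 / (n : ℝ)) * ∑ j, g (Xs j ω) - m|}
      ⊆ {ω | (n : ℝ) * t0 ≤ (∑ j, Z j) ω} ∪ {ω | (∑ j, Z j) ω ≤ -((n : ℝ) * t0)} := by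
    intro ω hω
    simp only [Set.mem_union, Set.mem_setOf_eq] at hω ⊢
    have hnpos : (0:ℝ) < n := Nat.cast_pos.mpr hn
    have hSval : (∑ j, Z j) ω = ∑ j, g (Xs j ω) - n * m := by
      rw [Finset.sum_apply]
      simp only [hZ, Finset.sum_sub_distrib, Finset.sum_const, Finset.card_univ,
        Fintype.card_fin, nsmul_eq_mul]
    have harg : (1 / (n : ℝ)) * ∑ j, g (Xs j ω) - m = (1 / (n : ℝ)) * (∑ j, Z j) ω := by
      rw [hSval]
      field_simp
    rw [harg, abs_mul, abs_of_pos (by positivity : (0:ℝ) < 1 / (n:ℝ))] at hω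
    have h1 : (n:ℝ) * t0 < |(∑ j, Z j) ω| := by
      have h2 : (n:ℝ) * t0 < n * (1 / (n:ℝ) * |(∑ j, Z j) ω|) :=
        (mul_lt_mul_iff_right₀ hnpos).mpr hω
      have h3 : (n:ℝ) * (1 / (n:ℝ) * |(∑ j, Z j) ω|) = |(∑ j, Z j) ω| := by
        field_simp
      linarith
    rw [lt_abs] at h1
    rcases h1 with h | h
    · left; linarith
    · right; linarith
  calc μ _ ≤ μ ({ω | (n : ℝ) * t0 ≤ (∑ j, Z j) ω} ∪ {ω | (∑ j, Z j) ω ≤ -((n : ℝ) * t0)}) :=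
        measure_mono hsub
    _ ≤ μ {ω | (n : ℝ) * t0 ≤ (∑ j, Z j) ω} + μ {ω | (∑ j, Z j) ω ≤ -((n : ℝ) * t0)} :=
        measure_union_le _ _
    _ ≤ ENNReal.ofReal (exp (-(2 * n * t0 ^ 2 / R ^ 2)))
        + ENNReal.ofReal (exp (-(2 * n * t0 ^ 2 / R ^ 2))) := by
        gcongr
        · exact (ENNReal.le_ofReal_iff_toReal_le (measure_ne_top μ _) (exp_pos _).le).mpr hup
        · exact (ENNReal.le_ofReal_iff_toReal_le (measure_ne_top μ _) (exp_pos _).le).mpr hlow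
    _ = ENNReal.ofReal (2 * exp (-(2 * n * t0 ^ 2 / R ^ 2))) := by
        rw [← ENNReal.ofReal_add (exp_pos _).le (exp_pos _).le]
        ring_nf


end HoeffdingAux

/-- Paper's Lemma 2 (constraint bounds for incremental latent max-entropy IRL):
with `X₁,…,X_n` i.i.d. from `p`, features valued in `[0, 1/(1−γ)]`, and
sampling-based estimates `σ_k` of the empirical feature expectations
`φ̂_k = (1/n)∑_j f_k(X_j)` satisfying `P(∃k: |σ_k − φ̂_k| > ε_s) ≤ δ_s`, it
holds with probability at least `1 − (δ + δ_s)`, where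
`δ = 2K·exp(−n·ε²·(1−γ)²/(2K²))`, that simultaneously for all `k`,
`|E_p[f_k] − σ_k| ≤ ε/(2K) + ε_s`. -/
theorem constraint_bounds_incremental_latent_maxent
    {X : Type*} [Fintype X] [Nonempty X]
    [MeasurableSpace X] [MeasurableSingletonClass X]
    {K : ℕ} (hK : 0 < K) {γ : ℝ} (hγ : γ ∈ Set.Ioo (0:ℝ) 1)
    (f : Fin K → X → ℝ) (hf : ∀ k x, f k x ∈ Set.Icc (0:ℝ) (1 / (1 - γ)))
    (p : X → ℝ) (hp0 : ∀ x, 0 ≤ p x) (hp1 : ∑ x : X, p x = 1)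
    {n : ℕ} (hn : 0 < n)
    {Ω : Type*} [MeasurableSpace Ω] (μ : Measure Ω) [IsProbabilityMeasure μ]
    (Xs : Fin n → Ω → X) (hmeas : ∀ j, Measurable (Xs j))
    (hindep : iIndepFun Xs μ)
    (hlaw : ∀ j x, μ {ω | Xs j ω = x} = ENNReal.ofReal (p x))
    (ε εs δs : ℝ) (hε : 0 < ε) (hεs : 0 ≤ εs) (hδs : δs ∈ Set.Icc (0:ℝ) 1)
    (σ : Fin K → Ω → ℝ)
    (hσ : μ {ω | ∃ k : Fin K,
        εs < |σ k ω - (1 / (n : ℝ)) * ∑ j, f k (Xs j ω)|} ≤ ENNReal.ofReal δs) :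
    ENNReal.ofReal
        (1 - (2 * (K : ℝ) *
            Real.exp (-((n : ℝ) * ε ^ 2 * (1 - γ) ^ 2) / (2 * (K : ℝ) ^ 2)) + δs)) ≤
      μ {ω | ∀ k : Fin K,
          |(∑ x : X, p x * f k x) - σ k ω| ≤ ε / (2 * (K : ℝ)) + εs} := by
  have hγ1 : (0:ℝ) < 1 - γ := by linarith [hγ.2]
  set R : ℝ := 1 / (1 - γ) with hR
  have hRpos : 0 < R := by positivity
  have hKpos : (0:ℝ) < K := Nat.cast_pos.mpr hK
  set t0 : ℝ := ε / (2 * (K : ℝ)) with ht0def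
  have ht0 : 0 < t0 := by positivity
  set e : ℝ := exp (-((n : ℝ) * ε ^ 2 * (1 - γ) ^ 2) / (2 * (K : ℝ) ^ 2)) with he
  have hexp_eq : -(2 * (n:ℝ) * t0 ^ 2 / R ^ 2)
      = -((n : ℝ) * ε ^ 2 * (1 - γ) ^ 2) / (2 * (K : ℝ) ^ 2) := by
    rw [ht0def, hR]
    field_simp
  -- Hoeffding event bound
  set Bad2 : Set Ω := {ω | ∃ k : Fin K,
      t0 < |(1 / (n : ℝ)) * ∑ j, f k (Xs j ω) - ∑ x : X, p x * f k x|} with hBad2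
  have hBad2le : μ Bad2 ≤ ENNReal.ofReal (2 * (K:ℝ) * e) := by
    have hsub : Bad2 ⊆ ⋃ k : Fin K, {ω | t0 <
        |(1 / (n : ℝ)) * ∑ j, f k (Xs j ω) - ∑ x : X, p x * f k x|} := by
      intro ω hω
      rcases hω with ⟨k, hk⟩
      exact Set.mem_iUnion.mpr ⟨k, hk⟩
    calc μ Bad2 ≤ ∑ k : Fin K, μ {ω | t0 <
          |(1 / (n : ℝ)) * ∑ j, f k (Xs j ω) - ∑ x : X, p x * f k x|} :=
        (measure_mono hsub).trans (measure_iUnion_fintype_le _ _)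
      _ ≤ ∑ _k : Fin K, ENNReal.ofReal (2 * e) := by
          refine Finset.sum_le_sum fun k _ => ?_
          have := hoeffding_tail μ hn Xs hmeas hindep p hp0 hp1 hlaw (f k) hRpos (hf k) ht0
          rwa [hexp_eq, ← he] at this
      _ = ENNReal.ofReal (2 * (K:ℝ) * e) := by
          rw [Finset.sum_const, Finset.card_univ, Fintype.card_fin, nsmul_eq_mul]
          rw [← ENNReal.ofReal_natCast K, ← ENNReal.ofReal_mul (Nat.cast_nonneg K)]
          congr 1
          ring
  set Bad1 : Set Ω := {ω | ∃ k : Fin K,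
      εs < |σ k ω - (1 / (n : ℝ)) * ∑ j, f k (Xs j ω)|} with hBad1
  set Good : Set Ω := {ω | ∀ k : Fin K,
      |(∑ x : X, p x * f k x) - σ k ω| ≤ ε / (2 * (K : ℝ)) + εs} with hGood
  have hcompl : Goodᶜ ⊆ Bad1 ∪ Bad2 := by
    intro ω hω
    by_contra hcon
    rw [Set.mem_union] at hcon
    push_neg at hcon
    rcases hcon with ⟨h1, h2⟩
    simp only [hBad1, Set.mem_setOf_eq, not_exists, not_lt] at h1
    simp only [hBad2, Set.mem_setOf_eq, not_exists, not_lt] at h2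
    apply hω
    intro k
    have a1 := h1 k
    have a2 := h2 k
    have : |(∑ x : X, p x * f k x) - σ k ω| ≤
        |(1 / (n : ℝ)) * ∑ j, f k (Xs j ω) - ∑ x : X, p x * f k x|
        + |σ k ω - (1 / (n : ℝ)) * ∑ j, f k (Xs j ω)| := by
      have := abs_sub_abs_le_abs_sub ((∑ x : X, p x * f k x) - σ k ω) 0
      calc |(∑ x : X, p x * f k x) - σ k ω|
          = |((1 / (n : ℝ)) * ∑ j, f k (Xs j ω) - ∑ x : X, p x * f k x)
            + (σ k ω - (1 / (n : ℝ)) * ∑ j, f k (Xs j ω))| := by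
            rw [abs_sub_comm]
            congr 1
            ring
        _ ≤ _ := abs_add_le _ _
    have hle : |(∑ x : X, p x * f k x) - σ k ω| ≤ t0 + εs := by linarith
    rw [ht0def] at hle
    exact hle
  have hGoodc : μ Goodᶜ ≤ ENNReal.ofReal (2 * (K:ℝ) * e + δs) := by
    calc μ Goodᶜ ≤ μ (Bad1 ∪ Bad2) := measure_mono hcompl
      _ ≤ μ Bad1 + μ Bad2 := measure_union_le _ _
      _ ≤ ENNReal.ofReal δs + ENNReal.ofReal (2 * (K:ℝ) * e) := add_le_add hσ hBad2le
      _ = ENNReal.ofReal (2 * (K:ℝ) * e + δs) := by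
          rw [← ENNReal.ofReal_add hδs.1 (by positivity)]
          rw [add_comm]
  have hone : (1:ENNReal) ≤ μ Good + μ Goodᶜ := by
    calc (1:ENNReal) = μ Set.univ := measure_univ.symm
      _ = μ (Good ∪ Goodᶜ) := by rw [Set.union_compl_self]
      _ ≤ μ Good + μ Goodᶜ := measure_union_le _ _
  rw [ENNReal.ofReal_sub _ (add_nonneg (by positivity) hδs.1), ENNReal.ofReal_one]
  rw [tsub_le_iff_right]
  calc (1:ENNReal) ≤ μ Good + μ Goodᶜ := hone
    _ ≤ μ Good + ENNReal.ofReal (2 * (K:ℝ) * e + δs) := add_le_add le_rfl hGoodc
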